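/- Let k ≥ 1, N = 2k, and suppose |c_i| = ρ for all i, for some real ρ ≥ 0. Define L0(n) = M₊ for n even, M₋ for n odd, and L1(n) = M₋ for n even, M₊ for n odd. Suppose the sequence (Y_n) in ℂ^N satisfies Y_{n+2} = L0(n) Y_n + L1(n) Y_{n+1} for all n ≥ 0, with Y_0 = 0 and Y_1 = B. Then Y_2 = M₋ B; for every even n > 2, Y_n = (ρ^{n−4} D₊ + ρ^{n−2} M₋) B; and for every odd n > 2, Y_n = ρ^{n−3} (D₊ + M₋) B. -/

import Mathlib

/-- `M₊` sends `e_{N−i+1} ↦ c_i e_i` for `1 ≤ i ≤ k` and `e_j ↦ 0` for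
`1 ≤ j ≤ k` (here `N = 2k`; matrix with respect to the standard basis,
0-indexed). -/
noncomputable def Mplus (k : ℕ) (c : Fin k → ℂ) :
    Matrix (Fin (2 * k)) (Fin (2 * k)) ℂ := fun a b =>
  if h : (a : ℕ) < k ∧ (a : ℕ) + (b : ℕ) = 2 * k - 1 then c ⟨a, h.1⟩ else 0

/-- `M₋ = M₊†` sends `e_i ↦ conj(c_i) e_{N−i+1}` for `1 ≤ i ≤ k` and
`e_j ↦ 0` for `k < j ≤ N`. -/
noncomputable def Mminus (k : ℕ) (c : Fin k → ℂ) :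
    Matrix (Fin (2 * k)) (Fin (2 * k)) ℂ := fun a b =>
  if h : (b : ℕ) < k ∧ (a : ℕ) + (b : ℕ) = 2 * k - 1 then
    starRingEnd ℂ (c ⟨b, h.1⟩) else 0

/-- `D₊` sends `e_i ↦ |c_i|² e_i` for `1 ≤ i ≤ k` and `e_j ↦ 0` for
`k < j ≤ N`. -/
noncomputable def Dplus (k : ℕ) (c : Fin k → ℂ) :
    Matrix (Fin (2 * k)) (Fin (2 * k)) ℂ := fun a b =>
  if h : a = b ∧ (a : ℕ) < k then ((‖c ⟨a, h.2⟩‖) ^ 2 : ℂ) else 0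

/-- `D₋` sends `e_j ↦ |c_{N−j+1}|² e_j` for `k < j ≤ N` and `e_i ↦ 0` for
`1 ≤ i ≤ k`. -/
noncomputable def Dminus (k : ℕ) (c : Fin k → ℂ) :
    Matrix (Fin (2 * k)) (Fin (2 * k)) ℂ := fun a b =>
  if h : a = b ∧ k ≤ (a : ℕ) then
    ((‖c ⟨2 * k - 1 - (a : ℕ), by have := a.isLt; omega⟩‖) ^ 2 : ℂ)
  else 0

/-- `L0(n) = M₊` for `n` even, `M₋` for `n` odd. -/
noncomputable def Lzero (k : ℕ) (c : Fin k → ℂ) (n : ℕ) :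
    Matrix (Fin (2 * k)) (Fin (2 * k)) ℂ :=
  if Even n then Mplus k c else Mminus k c

/-- `L1(n) = M₋` for `n` even, `M₊` for `n` odd. -/
noncomputable def Lone (k : ℕ) (c : Fin k → ℂ) (n : ℕ) :
    Matrix (Fin (2 * k)) (Fin (2 * k)) ℂ :=
  if Even n then Mminus k c else Mplus k c

lemma MpMm (k : ℕ) (c : Fin k → ℂ) : Mplus k c * Mminus k c = Dplus k c := by
  ext a b
  rw [Matrix.mul_apply]
  by_cases ha : (a : ℕ) < k
  · have hj : 2 * k - 1 - (a : ℕ) < 2 * k := by omega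
    rw [Finset.sum_eq_single (⟨2 * k - 1 - (a : ℕ), hj⟩ : Fin (2 * k))]
    · simp only [Mplus, Mminus, Dplus]
      by_cases hab : a = b
      · subst hab
        rw [dif_pos ⟨ha, show (a:ℕ) + (2*k-1-(a:ℕ)) = 2*k-1 by omega⟩,
          dif_pos ⟨ha, show (2*k-1-(a:ℕ)) + (a:ℕ) = 2*k-1 by omega⟩,
          dif_pos ⟨rfl, ha⟩, Complex.mul_conj]
        norm_cast
        rw [Complex.sq_norm]
      · rw [dif_pos ⟨ha, show (a:ℕ) + (2*k-1-(a:ℕ)) = 2*k-1 by omega⟩,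
          dif_neg (fun h => hab (Fin.ext (by
            have hs : (2*k-1-(a:ℕ)) + (b:ℕ) = 2*k-1 := h.2
            omega))),
          dif_neg (fun h => hab h.1), mul_zero]
    · intro j _ hne
      have : ¬((a : ℕ) < k ∧ (a : ℕ) + (j : ℕ) = 2 * k - 1) := by
        rintro ⟨_, hs⟩
        exact hne (Fin.ext (show (j:ℕ) = 2*k-1-(a:ℕ) by omega))
      simp only [Mplus]
      rw [dif_neg this, zero_mul]
    · simp
  · have h1 : ∀ j : Fin (2*k), Mplus k c a j = 0 := fun j => by
      simp only [Mplus]; exact dif_neg (fun h => ha h.1)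
    have h2 : Dplus k c a b = 0 := by
      simp only [Dplus]; exact dif_neg (fun h => ha h.2)
    rw [h2]
    exact Finset.sum_eq_zero fun j _ => by rw [h1 j, zero_mul]

lemma MpMp (k : ℕ) (c : Fin k → ℂ) : Mplus k c * Mplus k c = 0 := by
  ext a b
  rw [Matrix.mul_apply, Matrix.zero_apply]
  refine Finset.sum_eq_zero fun j _ => ?_
  simp only [Mplus]
  split_ifs with h1 h2
  · exact absurd h2.1 (by omega)
  · exact mul_zero _
  · exact zero_mul _
  · exact zero_mul _

lemma MmMm (k : ℕ) (c : Fin k → ℂ) : Mminus k c * Mminus k c = 0 := by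
  ext a b
  rw [Matrix.mul_apply, Matrix.zero_apply]
  refine Finset.sum_eq_zero fun j _ => ?_
  simp only [Mminus]
  split_ifs with h1 h2
  · exact absurd h1.1 (by omega)
  · exact mul_zero _
  · exact zero_mul _
  · exact zero_mul _

lemma MpDp (k : ℕ) (c : Fin k → ℂ) : Mplus k c * Dplus k c = 0 := by
  ext a b
  rw [Matrix.mul_apply, Matrix.zero_apply]
  refine Finset.sum_eq_zero fun j _ => ?_
  simp only [Mplus, Dplus]
  split_ifs with h1 h2
  · exact absurd h2.2 (by have := h2.1 ▸ h1.2; omega)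
  · exact mul_zero _
  · exact zero_mul _
  · exact zero_mul _

lemma MmDp (k : ℕ) (c : Fin k → ℂ) (ρ : ℝ) (hc : ∀ i, ‖c i‖ = ρ) :
    Mminus k c * Dplus k c = ((ρ ^ 2 : ℝ) : ℂ) • Mminus k c := by
  ext a b
  rw [Matrix.mul_apply, Matrix.smul_apply]
  rw [Finset.sum_eq_single b]
  · simp only [Mminus, Dplus]
    by_cases h : (b : ℕ) < k ∧ (a : ℕ) + (b : ℕ) = 2 * k - 1
    · rw [dif_pos h, dif_pos ⟨trivial, h.1⟩, hc, smul_eq_mul]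
      push_cast
      ring
    · rw [dif_neg h, zero_mul, smul_zero]
  · intro j _ hne
    have : Dplus k c j b = 0 := by
      simp only [Dplus]; exact dif_neg (fun h => hne h.1)
    rw [this, mul_zero]
  · simp

/-- Solution of the Cauchy problem (I): if `|c_i| = ρ` for all `i` and
`Y_{n+2} = L0(n) Y_n + L1(n) Y_{n+1}` with `Y_0 = 0`, `Y_1 = B`, then
`Y_2 = M₋ B`, `Y_n = (ρ^{n−4} D₊ + ρ^{n−2} M₋) B` for even `n > 2`, and
`Y_n = ρ^{n−3} (D₊ + M₋) B` for odd `n > 2`. -/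
theorem cauchy_problem_I_solution (k : ℕ) (hk : 1 ≤ k) (c : Fin k → ℂ)
    (ρ : ℝ) (hρ : 0 ≤ ρ) (hc : ∀ i, ‖c i‖ = ρ)
    (Y : ℕ → (Fin (2 * k) → ℂ)) (B : Fin (2 * k) → ℂ)
    (hrec : ∀ n : ℕ, Y (n + 2)
      = (Lzero k c n).mulVec (Y n) + (Lone k c n).mulVec (Y (n + 1)))
    (h0 : Y 0 = 0) (h1 : Y 1 = B) :
    Y 2 = (Mminus k c).mulVec B ∧
    (∀ n : ℕ, 2 < n → Even n →
      Y n = (((ρ ^ (n - 4) : ℝ) : ℂ) • Dplus k c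
              + ((ρ ^ (n - 2) : ℝ) : ℂ) • Mminus k c).mulVec B) ∧
    (∀ n : ℕ, 2 < n → Odd n →
      Y n = (((ρ ^ (n - 3) : ℝ) : ℂ) • (Dplus k c + Mminus k c)).mulVec B) := by
  set Mp := Mplus k c with hMpdef
  set Mm := Mminus k c with hMmdef
  set Dp := Dplus k c with hDpdef
  set u := Mm.mulVec B with hudef
  set v := Dp.mulVec B with hvdef
  have fMu : Mp.mulVec u = v := by
    rw [hudef, Matrix.mulVec_mulVec, hMpdef, hMmdef, MpMm, hvdef, hDpdef]
  have fMv : Mp.mulVec v = 0 := by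
    rw [hvdef, Matrix.mulVec_mulVec, hMpdef, hDpdef, MpDp, Matrix.zero_mulVec]
  have fmu : Mm.mulVec u = 0 := by
    rw [hudef, Matrix.mulVec_mulVec, hMmdef, MmMm, Matrix.zero_mulVec]
  have fmv : Mm.mulVec v = ((ρ ^ 2 : ℝ) : ℂ) • u := by
    rw [hvdef, Matrix.mulVec_mulVec, hMmdef, hDpdef, MmDp k c ρ hc,
      Matrix.smul_mulVec, hudef]
  have hL0e : ∀ n, Even n → Lzero k c n = Mp := fun n hn => if_pos hn
  have hL0o : ∀ n, ¬Even n → Lzero k c n = Mm := fun n hn => if_neg hn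
  have hL1e : ∀ n, Even n → Lone k c n = Mm := fun n hn => if_pos hn
  have hL1o : ∀ n, ¬Even n → Lone k c n = Mp := fun n hn => if_neg hn
  have hY2 : Y 2 = u := by
    have h := hrec 0
    rw [h0, h1, hL0e 0 Even.zero, hL1e 0 Even.zero, Matrix.mulVec_zero] at h
    simpa using h
  have hY3 : Y 3 = v + u := by
    have h := hrec 1
    rw [h1, hY2, hL0o 1 (by simp [Nat.even_iff]),
      hL1o 1 (by simp [Nat.even_iff]), fMu] at h
    rw [h]; exact add_comm u v
  have key : ∀ m : ℕ,
      Y (2 * m + 3) = ((ρ ^ (2 * m) : ℝ) : ℂ) • (v + u) ∧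
      Y (2 * m + 4) = ((ρ ^ (2 * m) : ℝ) : ℂ) • v
        + ((ρ ^ (2 * m + 2) : ℝ) : ℂ) • u := by
    intro m
    induction m with
    | zero =>
      refine ⟨by simpa using hY3, ?_⟩
      have h := hrec 2
      rw [hY2, hY3, hL0e 2 (by simp [Nat.even_iff]),
        hL1e 2 (by simp [Nat.even_iff]), fMu, Matrix.mulVec_add, fmv, fmu,
        add_zero] at h
      rw [h]
      norm_num
    | succ m ih =>
      obtain ⟨ih1, ih2⟩ := ih
      have hodd : ¬Even (2 * m + 3) := by simp [Nat.even_iff]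
      have heven : Even (2 * m + 4) := by simp [Nat.even_iff]
      have hA : Y (2 * m + 5) = ((ρ ^ (2 * m + 2) : ℝ) : ℂ) • (v + u) := by
        have h := hrec (2 * m + 3)
        rw [show 2 * m + 3 + 2 = 2 * m + 5 from rfl,
          show 2 * m + 3 + 1 = 2 * m + 4 from rfl,
          hL0o _ hodd, hL1o _ hodd, ih1, ih2] at h
        rw [h, Matrix.mulVec_smul, Matrix.mulVec_add, fmv, fmu, add_zero,
          Matrix.mulVec_add, Matrix.mulVec_smul, Matrix.mulVec_smul, fMv, fMu,
          smul_zero, zero_add, smul_smul]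
        rw [smul_add]
        push_cast
        module
      constructor
      · rw [show 2 * (m + 1) + 3 = 2 * m + 5 from by ring, hA]
        norm_num
        push_cast
        module
      · have h := hrec (2 * m + 4)
        rw [show 2 * m + 4 + 2 = 2 * (m + 1) + 4 from by ring,
          show 2 * m + 4 + 1 = 2 * m + 5 from rfl,
          hL0e _ heven, hL1e _ heven, ih2, hA] at h
        rw [h, Matrix.mulVec_add, Matrix.mulVec_smul, Matrix.mulVec_smul,
          fMv, fMu, smul_zero, zero_add, Matrix.mulVec_smul,
          Matrix.mulVec_add, fmv, fmu, add_zero, smul_smul]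
        push_cast
        module
  refine ⟨hY2, ?_, ?_⟩
  · intro n hn2 hne
    obtain ⟨t, ht⟩ := hne
    have htn : n = 2 * (t - 2) + 4 := by omega
    have e1 : n - 4 = 2 * (t - 2) := by omega
    have e2 : n - 2 = 2 * (t - 2) + 2 := by omega
    rw [Matrix.add_mulVec, Matrix.smul_mulVec, Matrix.smul_mulVec,
      ← hvdef, ← hudef, e1, e2, htn]
    exact (key (t - 2)).2
  · intro n hn2 hno
    obtain ⟨t, ht⟩ := hno
    have htn : n = 2 * (t - 1) + 3 := by omega
    have e1 : n - 3 = 2 * (t - 1) := by omega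
    rw [Matrix.smul_mulVec, Matrix.add_mulVec, ← hvdef, ← hudef, e1, htn]
    exact (key (t - 1)).1
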